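/- Let r ≥ 2 and let S_3 ⊆ F_2^3 × F_2^r × F_2^r be the set S_3 = {((0,0,0), 0_r, 0_r)} ∪ {((0,0,1), h, 0_r) : h ≠ 0} ∪ {((0,1,0), 0_r, 0_r), ((0,1,1), 0_r, 0_r)} ∪ {((1,0,0), 0_r, h) : h ≠ 0} ∪ {((1,0,1), h, 0_r) : h ≠ 0} ∪ {((1,1,0), 0_r, 0_r), ((1,1,1), 0_r, 0_r)}. Let A be the matrix over F_2 with rows and columns indexed by F_2^3 × F_2^r × F_2^r, with A_{x,y} = 1 if x + y ∈ S_3 and 0 otherwise. Then the rank of A over F_2 is at most 2^{2r} + 12·2^r. -/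

import Mathlib

/-- Membership in the generator set `S₃`: the set of columns of the parity-check
matrix `H₃`. -/
def inS3 {r : ℕ}
    (p : (ZMod 2 × ZMod 2 × ZMod 2) × (Fin r → ZMod 2) × (Fin r → ZMod 2)) : Prop :=
  (p.1 = (0, 0, 0) ∧ p.2.1 = 0 ∧ p.2.2 = 0) ∨
  (p.1 = (0, 0, 1) ∧ p.2.1 ≠ 0 ∧ p.2.2 = 0) ∨
  (p.1 = (0, 1, 0) ∧ p.2.1 = 0 ∧ p.2.2 = 0) ∨
  (p.1 = (0, 1, 1) ∧ p.2.1 = 0 ∧ p.2.2 = 0) ∨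
  (p.1 = (1, 0, 0) ∧ p.2.1 = 0 ∧ p.2.2 ≠ 0) ∨
  (p.1 = (1, 0, 1) ∧ p.2.1 ≠ 0 ∧ p.2.2 = 0) ∨
  (p.1 = (1, 1, 0) ∧ p.2.1 = 0 ∧ p.2.2 = 0) ∨
  (p.1 = (1, 1, 1) ∧ p.2.1 = 0 ∧ p.2.2 = 0)

instance {r : ℕ}
    (p : (ZMod 2 × ZMod 2 × ZMod 2) × (Fin r → ZMod 2) × (Fin r → ZMod 2)) :
    Decidable (inS3 p) := by
  unfold inS3; infer_instance

open Matrix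

lemma matRank_add_le {n m : Type*} [Fintype n] [Fintype m] {K : Type*} [Field K]
    (A B : Matrix n m K) : (A + B).rank ≤ A.rank + B.rank := by
  unfold Matrix.rank
  have h : LinearMap.range (A + B).mulVecLin ≤
      LinearMap.range A.mulVecLin ⊔ LinearMap.range B.mulVecLin := by
    rw [Matrix.mulVecLin_add]
    rintro v ⟨w, rfl⟩
    exact Submodule.add_mem_sup ⟨w, rfl⟩ ⟨w, rfl⟩
  exact (Submodule.finrank_mono h).trans
    (Submodule.finrank_add_le_finrank_add_finrank _ _)

lemma rank_eq_indicator_le {n m k : Type*} [Fintype n] [Fintype m] [Fintype k]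
    [DecidableEq n] [DecidableEq m] [DecidableEq k] (f : n → k) (g : m → k) :
    (Matrix.of fun x y => if f x = g y then (1 : ZMod 2) else 0).rank ≤ Fintype.card k := by
  have hfac : (Matrix.of fun x y => if f x = g y then (1 : ZMod 2) else 0) =
      (Matrix.of fun x s => if f x = s then (1 : ZMod 2) else 0) *
      (Matrix.of fun s y => if g y = s then (1 : ZMod 2) else 0) := by
    ext x y
    simp only [Matrix.mul_apply, Matrix.of_apply, ite_mul, one_mul, zero_mul]
    rw [Finset.sum_ite_eq (Finset.univ) (f x) (fun s => if g y = s then (1:ZMod 2) else 0)]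
    simp [eq_comm]
  rw [hfac]
  exact (Matrix.rank_mul_le_left _ _).trans (Matrix.rank_le_card_width _)

lemma pointwise (r : ℕ)
    (x y : (ZMod 2 × ZMod 2 × ZMod 2) × (Fin r → ZMod 2) × (Fin r → ZMod 2)) :
    (if inS3 (x + y) then (1 : ZMod 2) else 0) =
      (if x.2 = y.2 then (1 : ZMod 2) else 0) +
      (if (x.1.2.1, x.1.2.2, x.2.2) = (y.1.2.1, y.1.2.2 + 1, y.2.2) then (1 : ZMod 2) else 0) +
      (if (x.1.1, x.1.2.1, x.1.2.2, x.2.1) = (y.1.1 + 1, y.1.2.1, y.1.2.2, y.2.1)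
        then (1 : ZMod 2) else 0) := by
  obtain ⟨⟨a1, a2, a3⟩, h1, h2⟩ := x
  obtain ⟨⟨b1, b2, b3⟩, k1, k2⟩ := y
  have key : ∀ a b : Fin r → ZMod 2, a + b = 0 ↔ a = b := by
    have h2 : ∀ p q : ZMod 2, p + q = 0 ↔ p = q := by decide
    intro a b
    constructor
    · intro h; funext i; exact (h2 _ _).1 (congrFun h i)
    · rintro rfl; funext i; exact (h2 (a i) (a i)).2 rfl
  rcases eq_or_ne h1 k1 with hh1 | hh1 <;> rcases eq_or_ne h2 k2 with hh2 | hh2 <;>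
    simp [inS3, Prod.ext_iff, key, hh1, hh2] <;>
    revert a1 a2 a3 b1 b2 b3 <;> decide


theorem rank_H3_coset_graph (r : ℕ) (hr : 2 ≤ r)
    (A : Matrix ((ZMod 2 × ZMod 2 × ZMod 2) × (Fin r → ZMod 2) × (Fin r → ZMod 2))
         ((ZMod 2 × ZMod 2 × ZMod 2) × (Fin r → ZMod 2) × (Fin r → ZMod 2)) (ZMod 2))
    (hA : ∀ x y, A x y = if inS3 (x + y) then 1 else 0) :
    A.rank ≤ 2 ^ (2 * r) + 12 * 2 ^ r := by

  have hsum : A =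
      (Matrix.of fun x y => if x.2 = y.2 then (1 : ZMod 2) else 0) +
      (Matrix.of fun x y =>
        if (x.1.2.1, x.1.2.2, x.2.2) = (y.1.2.1, y.1.2.2 + 1, y.2.2) then (1 : ZMod 2) else 0) +
      (Matrix.of fun x y =>
        if (x.1.1, x.1.2.1, x.1.2.2, x.2.1) = (y.1.1 + 1, y.1.2.1, y.1.2.2, y.2.1)
          then (1 : ZMod 2) else 0) := by
    ext x y
    rw [hA]
    exact pointwise r x y
  have hrB := rank_eq_indicator_le (k := (Fin r → ZMod 2) × (Fin r → ZMod 2))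
    (fun x : (ZMod 2 × ZMod 2 × ZMod 2) × (Fin r → ZMod 2) × (Fin r → ZMod 2) => x.2)
    (fun y : (ZMod 2 × ZMod 2 × ZMod 2) × (Fin r → ZMod 2) × (Fin r → ZMod 2) => y.2)
  have hrC := rank_eq_indicator_le (k := ZMod 2 × ZMod 2 × (Fin r → ZMod 2))
    (fun x : (ZMod 2 × ZMod 2 × ZMod 2) × (Fin r → ZMod 2) × (Fin r → ZMod 2) =>
      (x.1.2.1, x.1.2.2, x.2.2))
    (fun y : (ZMod 2 × ZMod 2 × ZMod 2) × (Fin r → ZMod 2) × (Fin r → ZMod 2) =>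
      (y.1.2.1, y.1.2.2 + 1, y.2.2))
  have hrD := rank_eq_indicator_le (k := ZMod 2 × ZMod 2 × ZMod 2 × (Fin r → ZMod 2))
    (fun x : (ZMod 2 × ZMod 2 × ZMod 2) × (Fin r → ZMod 2) × (Fin r → ZMod 2) =>
      (x.1.1, x.1.2.1, x.1.2.2, x.2.1))
    (fun y : (ZMod 2 × ZMod 2 × ZMod 2) × (Fin r → ZMod 2) × (Fin r → ZMod 2) =>
      (y.1.1 + 1, y.1.2.1, y.1.2.2, y.2.1))
  have hcB : Fintype.card ((Fin r → ZMod 2) × (Fin r → ZMod 2)) = 2 ^ r * 2 ^ r := by simp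
  have hcC : Fintype.card (ZMod 2 × ZMod 2 × (Fin r → ZMod 2)) = 2 * (2 * 2 ^ r) := by simp
  have hcD : Fintype.card (ZMod 2 × ZMod 2 × ZMod 2 × (Fin r → ZMod 2)) =
      2 * (2 * (2 * 2 ^ r)) := by simp
  rw [hcB] at hrB; rw [hcC] at hrC; rw [hcD] at hrD
  rw [hsum]
  refine le_trans ((matRank_add_le _ _).trans (add_le_add_left (matRank_add_le _ _) _)) ?_
  refine le_trans (add_le_add (add_le_add hrB hrC) hrD) ?_
  have hpow : 2 ^ (2 * r) = 2 ^ r * 2 ^ r := by rw [two_mul, pow_add]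
  omega
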